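/- Let μ be a positive compactly supported measure on ℂ, P the orthogonal projection of L²(μ) onto P²(μ) (the closure of polynomials), M multiplication by z, P_n the projection onto polynomials of degree ≤ n, and (h_{jk}) the Hessenberg matrix of M restricted to P²(μ). Then the Hilbert–Schmidt norm of (I−P) M* P_n satisfies ‖(I−P) M* P_n‖²_HS = Σ_{j ≤ n} ( Σ_{k ≤ j+1} |h_{kj}|² − Σ_{k ≥ j−1, over relevant k} |h_{jk}|² ), i.e. for each j ≤ n, ‖(I−P)M* p_j‖² equals the squared norm of the j-th column of the Hessenberg matrix minus the squared norm of its j-th row. -/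

import Mathlib

open ContinuousLinearMap

private lemma parseval_aux {E : Type*} [NormedAddCommGroup E] [InnerProductSpace ℂ E]
    (b : HilbertBasis ℕ ℂ E) (x : E) :
    HasSum (fun i => ‖(inner ℂ (b i) x : ℂ)‖ ^ 2) (‖x‖ ^ 2) := by
  have h1 := (b.hasSum_inner_mul_inner x x).mapL Complex.reCLM
  have h2 : ∀ i, Complex.reCLM ((inner ℂ x (b i) : ℂ) * inner ℂ (b i) x)
      = ‖(inner ℂ (b i) x : ℂ)‖ ^ 2 := by
    intro i
    rw [← inner_conj_symm x (b i), RCLike.conj_mul]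
    norm_cast
  have h3 : Complex.reCLM (inner ℂ x x : ℂ) = ‖x‖ ^ 2 := by
    simpa using inner_self_eq_norm_sq (𝕜 := ℂ) x
  rw [h3] at h1
  exact funext h2 ▸ h1

/-- for the subnormal multiplier `M` (a normal operator on `L²(μ)` leaving
invariant `P²(μ)`, here abstracted as a closed subspace `K` with Hilbert basis `b` of
orthonormal polynomials), the Hilbert–Schmidt norm of `(I−P) M* P_n` equals
`Σ_{j≤n} (Σ_{k≤j+1} |h_{kj}|² − Σ_k |h_{jk}|²)`, i.e. for each `j ≤ n` the square norm of
the `j`-th column of the Hessenberg matrix minus the square norm of its `j`-th row. -/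
theorem stmt8 {H : Type*} [NormedAddCommGroup H] [InnerProductSpace ℂ H] [CompleteSpace H]
    (K : Submodule ℂ H) [K.HasOrthogonalProjection]
    (b : HilbertBasis ℕ ℂ K) (M : H →L[ℂ] H)
    (hnormal : ContinuousLinearMap.adjoint M ∘L M = M ∘L ContinuousLinearMap.adjoint M)
    (hinv : ∀ j : ℕ, M ((b j : K) : H) ∈ K)
    (h : ℕ → ℕ → ℂ)
    (hh : ∀ k j, h k j = (inner ℂ (M ((b j : K) : H)) ((b k : K) : H) : ℂ))
    (hhess : ∀ k j, j + 1 < k → h k j = 0)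
    (P : H →L[ℂ] H) (hP : P = K.subtypeL ∘L K.orthogonalProjectionOnto)
    (n : ℕ) :
    (∀ j ≤ n, ‖ContinuousLinearMap.adjoint M ((b j : K) : H)
          - P (ContinuousLinearMap.adjoint M ((b j : K) : H))‖ ^ 2
        = (∑ k ∈ Finset.range (j + 2), ‖h k j‖ ^ 2) - ∑' k : ℕ, ‖h j k‖ ^ 2) ∧
    (∑ j ∈ Finset.range (n + 1), ‖ContinuousLinearMap.adjoint M ((b j : K) : H)
          - P (ContinuousLinearMap.adjoint M ((b j : K) : H))‖ ^ 2)
      = ∑ j ∈ Finset.range (n + 1),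
          ((∑ k ∈ Finset.range (j + 2), ‖h k j‖ ^ 2) - ∑' k : ℕ, ‖h j k‖ ^ 2) := by
  have claim : ∀ j : ℕ, ‖ContinuousLinearMap.adjoint M ((b j : K) : H)
          - P (ContinuousLinearMap.adjoint M ((b j : K) : H))‖ ^ 2
        = (∑ k ∈ Finset.range (j + 2), ‖h k j‖ ^ 2) - ∑' k : ℕ, ‖h j k‖ ^ 2 := by
    intro j
    set pj : H := ((b j : K) : H) with hpj
    set x : H := ContinuousLinearMap.adjoint M pj with hx
    -- column: ‖M pj‖² = finite sum
    set y : K := ⟨M pj, hinv j⟩ with hy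
    have hcol : ‖M pj‖ ^ 2 = ∑ k ∈ Finset.range (j + 2), ‖h k j‖ ^ 2 := by
      have hp := parseval_aux b y
      have heq : ∀ k, ‖(inner ℂ (b k) y : ℂ)‖ ^ 2 = ‖h k j‖ ^ 2 := by
        intro k
        rw [hh k j, Submodule.coe_inner, norm_inner_symm]
      have hzero : ∀ k ∉ Finset.range (j + 2), ‖h k j‖ ^ 2 = 0 := by
        intro k hk
        rw [hhess k j (by simp only [Finset.mem_range] at hk; omega)]
        simp
      have hp' : HasSum (fun k => ‖h k j‖ ^ 2) (‖y‖ ^ 2) := funext heq ▸ hp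
      have := hp'.unique (hasSum_sum_of_ne_finset_zero hzero)
      rw [← this]
      rfl
    -- row: tsum = ‖P x‖²
    have hPx : P x = ((K.orthogonalProjectionOnto x : K) : H) := by rw [hP]; rfl
    have hrow : HasSum (fun k => ‖h j k‖ ^ 2) (‖P x‖ ^ 2) := by
      have hp := parseval_aux b (K.orthogonalProjectionOnto x)
      have heq : ∀ k, ‖(inner ℂ (b k) (K.orthogonalProjectionOnto x) : ℂ)‖ ^ 2 = ‖h j k‖ ^ 2 := by
        intro k
        rw [Submodule.inner_orthogonalProjectionOnto_eq_of_mem_left, hx, adjoint_inner_right, hh j k]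
      have hn : ‖(K.orthogonalProjectionOnto x : K)‖ = ‖P x‖ := by rw [hPx]; rfl
      rw [← hn]
      exact funext heq ▸ hp
    -- ‖x‖ = ‖M pj‖
    have hadj : ‖x‖ ^ 2 = ‖M pj‖ ^ 2 := by
      have h1 : (inner ℂ x x : ℂ) = inner ℂ (M pj) (M pj) := by
        rw [hx, adjoint_inner_left]
        have hc := ContinuousLinearMap.ext_iff.mp hnormal pj
        simp only [ContinuousLinearMap.comp_apply] at hc
        rw [← hc, adjoint_inner_right]
      rw [inner_self_eq_norm_sq_to_K, inner_self_eq_norm_sq_to_K] at h1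
      exact_mod_cast h1
    -- Pythagoras
    have hpyth : ‖x - P x‖ ^ 2 = ‖x‖ ^ 2 - ‖P x‖ ^ 2 := by
      have h0 : (inner ℂ (x - P x) (P x) : ℂ) = 0 := by
        rw [hPx]
        exact Submodule.starProjection_inner_eq_zero (K := K) x _ (Submodule.coe_mem _)
      have := norm_add_sq_eq_norm_sq_add_norm_sq_of_inner_eq_zero (x - P x) (P x) h0
      rw [sub_add_cancel] at this
      linarith
    rw [hpyth, hadj, hcol, hrow.tsum_eq]
  exact ⟨fun j _ => claim j, Finset.sum_congr rfl fun j _ => claim j⟩
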